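/- Let Y be a simple graph on vertex set {1,…,n} and let σ and τ be two bijections lying in the same connected component of FS(Path_n, Y). Then the distance between σ and τ in FS(Path_n, Y) equals inv(σ,τ), the number of (σ,τ)-inversions. -/

import Mathlib

open SimpleGraph

/-- Adjacency in the friends-and-strangers graph: bijections `σ` and `τ` are adjacent iff there
is an edge `{a, b}` of `X` such that `{σ a, σ b}` is an edge of `Y`, `σ a = τ b`, `σ b = τ a`,
and `σ c = τ c` for every vertex `c` other than `a` and `b`. -/
def fsAdj {α β : Type*} (X : SimpleGraph α) (Y : SimpleGraph β) (σ τ : α ≃ β) : Prop :=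
  ∃ a b : α, X.Adj a b ∧ Y.Adj (σ a) (σ b) ∧ σ a = τ b ∧ σ b = τ a ∧
    ∀ c : α, c ≠ a → c ≠ b → σ c = τ c

/-- The friends-and-strangers graph `FS(X, Y)` of two simple graphs on the same number of
vertices; its vertices are bijections from `V(X)` to `V(Y)`. -/
def FS {α β : Type*} (X : SimpleGraph α) (Y : SimpleGraph β) : SimpleGraph (α ≃ β) where
  Adj := fsAdj X Y
  symm := by
    constructor
    rintro σ τ ⟨a, b, hX, hY, h1, h2, h3⟩
    refine ⟨a, b, hX, ?_, h2.symm, h1.symm, fun c hca hcb => (h3 c hca hcb).symm⟩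
    rw [← h2, ← h1]
    exact hY.symm
  loopless := by
    constructor
    rintro σ ⟨a, b, hX, hY, h1, _, _⟩
    exact hX.ne (σ.injective h1)

namespace FSProof

variable {n : ℕ}

/-- Apply the move swapping positions `p` and `q`. -/
def mv (σ : Fin n ≃ Fin n) (p q : Fin n) : Fin n ≃ Fin n := (Equiv.swap p q).trans σ

lemma mv_apply (σ : Fin n ≃ Fin n) (p q x : Fin n) : mv σ p q x = σ (Equiv.swap p q x) := rfl

lemma mv_symm_apply (σ : Fin n ≃ Fin n) (p q x : Fin n) :
    (mv σ p q).symm x = Equiv.swap p q (σ.symm x) := by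
  simp [mv]

lemma mv_eq (σ : Fin n ≃ Fin n) (p q : Fin n) :
    mv σ p q = σ.trans (Equiv.swap (σ p) (σ q)) := by
  ext x
  simp [mv, Equiv.swap_apply_apply]

lemma mv_trans_swap (σ : Fin n ≃ Fin n) (u v : Fin n) :
    (σ.trans (Equiv.swap u v)).trans (Equiv.swap u v) = σ := by
  ext x; simp

/-- normalized pair -/
def npr (x y : Fin n) : Fin n × Fin n := if x < y then (x, y) else (y, x)

lemma npr_cases (x y : Fin n) : npr x y = (x, y) ∨ npr x y = (y, x) := by
  unfold npr; split
  · exact Or.inl rfl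
  · exact Or.inr rfl

lemma npr_comm (x y : Fin n) : npr x y = npr y x := by
  unfold npr
  rcases lt_trichotomy x y with h | h | h
  · simp [h, asymm h]
  · simp [h]
  · simp [h, asymm h]

lemma npr_fst_lt {x y : Fin n} (h : x ≠ y) : (npr x y).1 < (npr x y).2 := by
  unfold npr; split
  · assumption
  · rename_i hxy
    exact lt_of_le_of_ne (not_lt.mp hxy) (Ne.symm h)

lemma npr_of_lt {x y : Fin n} (h : x < y) : npr x y = (x, y) := by
  unfold npr; simp [h]

lemma eq_of_npr_eq {i j x y : Fin n} (h : npr i j = npr x y) :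
    (i = x ∧ j = y) ∨ (i = y ∧ j = x) := by
  rcases npr_cases i j with h1 | h1 <;> rcases npr_cases x y with h2 | h2 <;>
    rw [h1, h2] at h <;> simp only [Prod.mk.injEq] at h <;> tauto

/-- order of values: `i` appears to the left of `j` -/
def ord (σ : Fin n ≃ Fin n) (i j : Fin n) : Prop := σ.symm i < σ.symm j

instance (σ : Fin n ≃ Fin n) (i j : Fin n) : Decidable (ord σ i j) := by
  unfold ord; infer_instance

lemma ord_not {σ : Fin n ≃ Fin n} {i j : Fin n} (h : i ≠ j) : ¬ ord σ i j ↔ ord σ j i := by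
  have : σ.symm i ≠ σ.symm j := fun e => h (σ.symm.injective e)
  unfold ord
  rw [Fin.lt_def, Fin.lt_def]
  have h2 : (σ.symm i : ℕ) ≠ (σ.symm j : ℕ) := fun e => this (Fin.ext e)
  omega

lemma swap_lt_iff {p q a b : Fin n} (h : (p : ℕ) + 1 = q) (h1 : ¬(a = p ∧ b = q))
    (h2 : ¬(a = q ∧ b = p)) :
    (Equiv.swap p q a < Equiv.swap p q b ↔ a < b) := by
  simp only [Equiv.swap_apply_def]
  split_ifs <;> (simp only [Fin.ext_iff, Fin.lt_def, not_and] at h1 h2 ⊢ <;> omega)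

lemma ord_mv_of_ne {σ : Fin n ≃ Fin n} {p q : Fin n} (h : (p : ℕ) + 1 = q) {i j : Fin n}
    (h1 : ¬(i = σ p ∧ j = σ q)) (h2 : ¬(i = σ q ∧ j = σ p)) :
    (ord (mv σ p q) i j ↔ ord σ i j) := by
  unfold ord
  rw [mv_symm_apply, mv_symm_apply]
  refine swap_lt_iff h ?_ ?_ <;> simp only [Equiv.symm_apply_eq]
  · exact h1
  · exact h2

lemma flt {p q : Fin n} (h : (p : ℕ) + 1 = q) : p < q := Fin.lt_def.mpr (by omega)

lemma ord_pair (σ : Fin n ≃ Fin n) (p q : Fin n) : ord σ (σ p) (σ q) ↔ p < q := by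
  simp [ord]

lemma ord_mv_pair (σ : Fin n ≃ Fin n) (p q : Fin n) :
    ord (mv σ p q) (σ p) (σ q) ↔ q < p := by
  simp [ord, mv_symm_apply]


/-- swapped (normalized) value pairs along a move list -/
def sps (σ : Fin n ≃ Fin n) : List (Fin n × Fin n) → List (Fin n × Fin n)
  | [] => []
  | (p, q) :: l => npr (σ p) (σ q) :: sps (mv σ p q) l

def run (σ : Fin n ≃ Fin n) : List (Fin n × Fin n) → Fin n ≃ Fin n
  | [] => σ
  | (p, q) :: l => run (mv σ p q) l

variable {Y : SimpleGraph (Fin n)}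

/-- valid walks in FS(Path_n, Y), as lists of position pairs -/
inductive W (Y : SimpleGraph (Fin n)) :
    (Fin n ≃ Fin n) → List (Fin n × Fin n) → (Fin n ≃ Fin n) → Prop
  | nil (σ : Fin n ≃ Fin n) : W Y σ [] σ
  | cons {σ τ : Fin n ≃ Fin n} {p q : Fin n} {l : List (Fin n × Fin n)}
      (hpq : (p : ℕ) + 1 = q) (hY : Y.Adj (σ p) (σ q))
      (hw : W Y (mv σ p q) l τ) : W Y σ ((p, q) :: l) τ

lemma sps_length (σ : Fin n ≃ Fin n) (l : List (Fin n × Fin n)) :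
    (sps σ l).length = l.length := by
  induction l generalizing σ with
  | nil => rfl
  | cons m l ih => obtain ⟨p, q⟩ := m; simp [sps, ih]

lemma run_eq {σ τ : Fin n ≃ Fin n} {l} (hW : W Y σ l τ) : run σ l = τ := by
  induction hW with
  | nil => rfl
  | cons hpq hY hw ih => exact ih

lemma W_append {σ β τ : Fin n ≃ Fin n} {l₁ l₂} (h1 : W Y σ l₁ β) (h2 : W Y β l₂ τ) :
    W Y σ (l₁ ++ l₂) τ := by
  induction h1 with
  | nil => exact h2
  | cons hpq hY hw ih => exact W.cons hpq hY (ih h2)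

lemma W_append_split {σ τ : Fin n ≃ Fin n} {l₁ l₂} (h : W Y σ (l₁ ++ l₂) τ) :
    W Y σ l₁ (run σ l₁) ∧ W Y (run σ l₁) l₂ τ := by
  induction l₁ generalizing σ with
  | nil => exact ⟨W.nil σ, h⟩
  | cons m l₁ ih =>
    obtain ⟨p, q⟩ := m
    cases h with
    | cons hpq hY hw =>
      obtain ⟨w1, w2⟩ := ih hw
      exact ⟨W.cons hpq hY w1, w2⟩

lemma sps_append (σ : Fin n ≃ Fin n) (l₁ l₂ : List (Fin n × Fin n)) :
    sps σ (l₁ ++ l₂) = sps σ l₁ ++ sps (run σ l₁) l₂ := by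
  induction l₁ generalizing σ with
  | nil => rfl
  | cons m l₁ ih => obtain ⟨p, q⟩ := m; simp [sps, run, ih]

lemma adj_of_mem_sps {σ τ : Fin n ≃ Fin n} {l} (hW : W Y σ l τ) :
    ∀ f ∈ sps σ l, Y.Adj f.1 f.2 := by
  induction hW with
  | nil => intro f hf; simp [sps] at hf
  | cons hpq hY hw ih =>
    intro f hf
    rw [sps, List.mem_cons] at hf
    rcases hf with rfl | hf
    · rcases npr_cases (_ : Fin n) _ with hc | hc <;> rw [hc]
      · exact hY
      · exact hY.symm
    · exact ih f hf

lemma fst_lt_of_mem_sps {σ τ : Fin n ≃ Fin n} {l} (hW : W Y σ l τ) :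
    ∀ f ∈ sps σ l, f.1 < f.2 := by
  induction hW with
  | nil => intro f hf; simp [sps] at hf
  | cons hpq hY hw ih =>
    intro f hf
    rw [sps, List.mem_cons] at hf
    rcases hf with rfl | hf
    · exact npr_fst_lt hY.ne
    · exact ih f hf

/-- the inversion finset, matching the statement's set -/
def I (σ τ : Fin n ≃ Fin n) : Finset (Fin n × Fin n) :=
  Finset.univ.filter fun p => p.1 < p.2 ∧
    ((σ.symm p.1 < σ.symm p.2 ∧ τ.symm p.2 < τ.symm p.1) ∨
      (σ.symm p.2 < σ.symm p.1 ∧ τ.symm p.1 < τ.symm p.2))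

lemma mem_I {σ τ : Fin n ≃ Fin n} {i j : Fin n} :
    (i, j) ∈ I σ τ ↔ i < j ∧ ((ord σ i j ∧ ord τ j i) ∨ (ord σ j i ∧ ord τ i j)) := by
  simp [I, ord]

lemma mem_I_iff_xor {σ τ : Fin n ≃ Fin n} {i j : Fin n} (hij : i < j) :
    ((i, j) ∈ I σ τ) ↔ ¬ (ord σ i j ↔ ord τ i j) := by
  rw [mem_I]
  have hne : i ≠ j := ne_of_lt hij
  have h1 := ord_not (σ := σ) hne
  have h2 := ord_not (σ := τ) hne
  tauto

lemma I_self (τ : Fin n ≃ Fin n) : I τ τ = ∅ := by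
  ext ⟨i, j⟩
  simp only [Finset.notMem_empty, iff_false]
  rw [mem_I]
  rintro ⟨-, ⟨a, b⟩ | ⟨a, b⟩⟩ <;> exact absurd b (lt_asymm a)


lemma ord_pair' (σ : Fin n ≃ Fin n) (p q : Fin n) : ord σ (σ q) (σ p) ↔ q < p := by
  simp [ord]

lemma ord_mv_pair' (σ : Fin n ≃ Fin n) (p q : Fin n) :
    ord (mv σ p q) (σ q) (σ p) ↔ p < q := by
  simp [ord, mv_symm_apply]

lemma npr_ne_conds {i j x y : Fin n} (hij : i < j) (hne : (i, j) ≠ npr x y) :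
    ¬(i = x ∧ j = y) ∧ ¬(i = y ∧ j = x) := by
  constructor
  · rintro ⟨rfl, rfl⟩
    exact hne (npr_of_lt hij).symm
  · rintro ⟨rfl, rfl⟩
    rw [npr_comm] at hne
    exact hne (npr_of_lt hij).symm

lemma mem_I_mv {σ τ : Fin n ≃ Fin n} {p q : Fin n} (h : (p : ℕ) + 1 = q) (hne : σ p ≠ σ q)
    (a : Fin n × Fin n) :
    a ∈ I (mv σ p q) τ ↔ ¬(a ∈ I σ τ ↔ a = npr (σ p) (σ q)) := by
  obtain ⟨i, j⟩ := a
  by_cases hij : i < j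
  · have f1 : ord σ (σ p) (σ q) := (ord_pair σ p q).mpr (flt h)
    have f2 : ¬ ord σ (σ q) (σ p) := fun hx => asymm (flt h) ((ord_pair' σ p q).mp hx)
    have f3 : ¬ ord (mv σ p q) (σ p) (σ q) := fun hx => asymm (flt h) ((ord_mv_pair σ p q).mp hx)
    have f4 : ord (mv σ p q) (σ q) (σ p) := (ord_mv_pair' σ p q).mpr (flt h)
    by_cases hae : (i, j) = npr (σ p) (σ q)
    · rw [mem_I_iff_xor hij, mem_I_iff_xor hij]
      have hflip : ord σ i j ↔ ¬ ord (mv σ p q) i j := by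
        rcases eq_of_npr_eq ((npr_of_lt hij).trans hae) with ⟨h1, h2⟩ | ⟨h1, h2⟩ <;>
          subst h1 <;> subst h2 <;> tauto
      have htrue : ((i, j) = npr (σ p) (σ q)) ↔ True := iff_true_intro hae
      rw [htrue, iff_true]
      clear f1 f2 f3 f4
      tauto
    · obtain ⟨hc1, hc2⟩ := npr_ne_conds hij hae
      have e1 : ord (mv σ p q) i j ↔ ord σ i j := ord_mv_of_ne h hc1 hc2
      have e2 : ord (mv σ p q) j i ↔ ord σ j i :=
        ord_mv_of_ne h (fun hx => hc2 ⟨hx.2, hx.1⟩) (fun hx => hc1 ⟨hx.2, hx.1⟩)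
      rw [mem_I, mem_I, e1, e2]
      simp only [hae, iff_false]
      clear f1 f2 f3 f4 e1 e2 hc1 hc2 hae hne h
      generalize ord σ i j = O1
      generalize ord σ j i = O2
      generalize ord τ i j = O3
      generalize ord τ j i = O4
      tauto
  · have h1 : ¬ ((i, j) ∈ I (mv σ p q) τ) := fun hx => hij (mem_I.mp hx).1
    have h2 : ¬ ((i, j) ∈ I σ τ) := fun hx => hij (mem_I.mp hx).1
    have h3 : (i, j) ≠ npr (σ p) (σ q) := by
      intro hx
      have hlt := npr_fst_lt hne
      rw [← hx] at hlt
      exact hij hlt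
    tauto


lemma I_mv_of_mem {σ τ : Fin n ≃ Fin n} {p q : Fin n} (h : (p : ℕ) + 1 = q) (hne : σ p ≠ σ q)
    (he : npr (σ p) (σ q) ∈ I σ τ) :
    I (mv σ p q) τ = (I σ τ).erase (npr (σ p) (σ q)) := by
  ext a
  rw [mem_I_mv h hne, Finset.mem_erase]
  by_cases ha : a = npr (σ p) (σ q)
  · subst ha; tauto
  · tauto

lemma I_mv_of_not_mem {σ τ : Fin n ≃ Fin n} {p q : Fin n} (h : (p : ℕ) + 1 = q)
    (hne : σ p ≠ σ q) (he : npr (σ p) (σ q) ∉ I σ τ) :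
    I (mv σ p q) τ = insert (npr (σ p) (σ q)) (I σ τ) := by
  ext a
  rw [mem_I_mv h hne, Finset.mem_insert]
  by_cases ha : a = npr (σ p) (σ q)
  · subst ha; tauto
  · tauto

lemma card_I_le {σ τ : Fin n ≃ Fin n} {l} (hW : W Y σ l τ) : (I σ τ).card ≤ l.length := by
  induction hW with
  | nil => simp [I_self]
  | @cons σ' τ' p q l' hpq hY hw ih =>
    have hne := hY.ne
    simp only [List.length_cons]
    by_cases he : npr (σ' p) (σ' q) ∈ I σ' τ'
    · have heq := I_mv_of_mem hpq hne he
      rw [heq, Finset.card_erase_of_mem he] at ih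
      omega
    · have heq := I_mv_of_not_mem hpq hne he
      rw [heq, Finset.card_insert_of_notMem he] at ih
      omega

/-- occurrence count, avoiding `BEq` instance mismatches -/
def cnt {β : Type*} [DecidableEq β] (e : β) (L : List β) : ℕ :=
  List.countP (fun f => decide (f = e)) L

lemma cnt_cons {β : Type*} [DecidableEq β] (e a : β) (L : List β) :
    cnt e (a :: L) = cnt e L + if a = e then 1 else 0 := by
  simp [cnt, List.countP_cons]

lemma cnt_eq_zero {β : Type*} [DecidableEq β] {e : β} {L : List β} (h : e ∉ L) :
    cnt e L = 0 := by
  rw [cnt, List.countP_eq_zero]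
  intro a ha
  simp only [decide_eq_true_eq]
  rintro rfl
  exact h ha

lemma cnt_pos {β : Type*} [DecidableEq β] {e : β} {L : List β} (h : e ∈ L) : 0 < cnt e L :=
  List.countP_pos_iff.mpr ⟨e, h, by simp⟩

lemma cnt_le_one_of_nodup {β : Type*} [DecidableEq β] {e : β} {L : List β} (h : L.Nodup) :
    cnt e L ≤ 1 := by
  induction L with
  | nil => simp [cnt]
  | cons a L ih =>
    obtain ⟨ha, hL⟩ := List.nodup_cons.mp h
    rw [cnt_cons]
    by_cases hae : a = e
    · subst hae
      rw [cnt_eq_zero ha]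
      simp
    · simp only [hae, if_false]
      simpa using ih hL

lemma ord_iff_even {σ τ : Fin n ≃ Fin n} {l} (hW : W Y σ l τ) {i j : Fin n} (hij : i ≠ j) :
    ((ord σ i j ↔ ord τ i j)) ↔ Even (cnt (npr i j) (sps σ l)) := by
  induction hW with
  | nil => simp [sps, cnt]
  | @cons σ' τ' p q l' hpq hY hw ih =>
    have hne := hY.ne
    rw [show sps σ' ((p, q) :: l') = npr (σ' p) (σ' q) :: sps (mv σ' p q) l' from rfl]
    rw [cnt_cons]
    by_cases hc : npr i j = npr (σ' p) (σ' q)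
    · have f1 : ord σ' (σ' p) (σ' q) := (ord_pair σ' p q).mpr (flt hpq)
      have f2 : ¬ ord σ' (σ' q) (σ' p) := fun hx => asymm (flt hpq) ((ord_pair' σ' p q).mp hx)
      have f3 : ¬ ord (mv σ' p q) (σ' p) (σ' q) :=
        fun hx => asymm (flt hpq) ((ord_mv_pair σ' p q).mp hx)
      have f4 : ord (mv σ' p q) (σ' q) (σ' p) := (ord_mv_pair' σ' p q).mpr (flt hpq)
      have hflip : ord σ' i j ↔ ¬ ord (mv σ' p q) i j := by
        rcases eq_of_npr_eq hc with ⟨h1, h2⟩ | ⟨h1, h2⟩ <;> subst h1 <;> subst h2 <;> tauto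
      rw [if_pos hc.symm, Nat.even_add_one]
      clear f1 f2 f3 f4
      generalize hg : ord (mv σ' p q) i j = O1 at *
      tauto
    · rw [if_neg (Ne.symm hc), Nat.add_zero]
      have hsame : ord (mv σ' p q) i j ↔ ord σ' i j := by
        refine ord_mv_of_ne hpq ?_ ?_
        · rintro ⟨rfl, rfl⟩; exact hc rfl
        · rintro ⟨rfl, rfl⟩; exact hc (npr_comm _ _)
      rw [← hsame]
      exact ih

lemma length_eq_card_of_nodup {σ τ : Fin n ≃ Fin n} {l} (hW : W Y σ l τ)
    (hnd : (sps σ l).Nodup) : l.length = (I σ τ).card := by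
  induction hW with
  | nil => simp [I_self]
  | @cons σ' τ' p q l' hpq hY hw ih =>
    have hne := hY.ne
    rw [show sps σ' ((p, q) :: l') = npr (σ' p) (σ' q) :: sps (mv σ' p q) l' from rfl] at hnd
    obtain ⟨hnotin, hnd'⟩ := List.nodup_cons.mp hnd
    have helt : (npr (σ' p) (σ' q)).1 < (npr (σ' p) (σ' q)).2 := npr_fst_lt hne
    have hcount : cnt (npr (σ' p) (σ' q)) (sps (mv σ' p q) l') = 0 :=
      cnt_eq_zero hnotin
    have heven : ord (mv σ' p q) (npr (σ' p) (σ' q)).1 (npr (σ' p) (σ' q)).2 ↔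
        ord τ' (npr (σ' p) (σ' q)).1 (npr (σ' p) (σ' q)).2 := by
      have hije : (npr (σ' p) (σ' q)).1 ≠ (npr (σ' p) (σ' q)).2 := ne_of_lt helt
      have hx := ord_iff_even hw hije
      rw [npr_of_lt helt] at hx
      rw [hcount] at hx
      simpa using hx
    have f1 : ord σ' (σ' p) (σ' q) := (ord_pair σ' p q).mpr (flt hpq)
    have f2 : ¬ ord σ' (σ' q) (σ' p) := fun hx => asymm (flt hpq) ((ord_pair' σ' p q).mp hx)
    have f3 : ¬ ord (mv σ' p q) (σ' p) (σ' q) :=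
      fun hx => asymm (flt hpq) ((ord_mv_pair σ' p q).mp hx)
    have f4 : ord (mv σ' p q) (σ' q) (σ' p) := (ord_mv_pair' σ' p q).mpr (flt hpq)
    have hflip : ord σ' (npr (σ' p) (σ' q)).1 (npr (σ' p) (σ' q)).2 ↔
        ¬ ord (mv σ' p q) (npr (σ' p) (σ' q)).1 (npr (σ' p) (σ' q)).2 := by
      rcases npr_cases (σ' p) (σ' q) with hcc | hcc <;> rw [hcc] <;> tauto
    have hmem : npr (σ' p) (σ' q) ∈ I σ' τ' := by
      have hx : ¬ (ord σ' (npr (σ' p) (σ' q)).1 (npr (σ' p) (σ' q)).2 ↔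
          ord τ' (npr (σ' p) (σ' q)).1 (npr (σ' p) (σ' q)).2) := by tauto
      exact (mem_I_iff_xor helt).mpr hx
    have hcard := ih hnd'
    rw [I_mv_of_mem hpq hne hmem, Finset.card_erase_of_mem hmem] at hcard
    simp only [List.length_cons]
    have hpos : 0 < (I σ' τ').card := Finset.card_pos.mpr ⟨_, hmem⟩
    omega


section ListHelpers

variable {α : Type*}

lemma exists_first_repeat (x0 : α) {L : List α} (h : ¬ L.Nodup) :
    ∃ s t, s < t ∧ t < L.length ∧ L.getD s x0 = L.getD t x0 ∧
      ∀ k k', s ≤ k → k < k' → k' < t → L.getD k x0 ≠ L.getD k' x0 := by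
  classical
  have hex : ∃ t, ∃ s, s < t ∧ t < L.length ∧ L.getD s x0 = L.getD t x0 := by
    rw [List.nodup_iff_injective_get] at h
    simp only [Function.Injective, not_forall] at h
    obtain ⟨a, b, hab, hne⟩ := h
    rcases lt_or_gt_of_ne (fun e : (a : ℕ) = (b : ℕ) => hne (Fin.ext e)) with hlt | hlt
    · refine ⟨b.1, a.1, hlt, b.2, ?_⟩
      rw [List.getD_eq_getElem _ _ a.2, List.getD_eq_getElem _ _ b.2]
      simpa [List.get_eq_getElem] using hab
    · refine ⟨a.1, b.1, hlt, a.2, ?_⟩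
      rw [List.getD_eq_getElem _ _ a.2, List.getD_eq_getElem _ _ b.2]
      simpa [List.get_eq_getElem] using hab.symm
  let t := Nat.find hex
  obtain ⟨s, hst, htlen, heq⟩ := Nat.find_spec hex
  refine ⟨s, t, hst, htlen, heq, ?_⟩
  intro k k' hsk hkk' hk't hkeq
  exact Nat.find_min hex hk't ⟨k, hkk', lt_trans hk't htlen, hkeq⟩

lemma nodup_of_getD_ne (x0 : α) {S : List α}
    (h : ∀ i j, i < j → j < S.length → S.getD i x0 ≠ S.getD j x0) : S.Nodup := by
  rw [List.nodup_iff_injective_get]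
  intro a b hab
  by_contra hne
  rcases lt_or_gt_of_ne (fun e : a.1 = b.1 => hne (Fin.ext e)) with hlt | hlt
  · refine h a.1 b.1 hlt b.2 ?_
    rw [List.getD_eq_getElem _ _ a.2, List.getD_eq_getElem _ _ b.2]
    simpa [List.get_eq_getElem] using hab
  · refine h b.1 a.1 hlt a.2 ?_
    rw [List.getD_eq_getElem _ _ a.2, List.getD_eq_getElem _ _ b.2]
    simpa [List.get_eq_getElem] using hab.symm

lemma getD_of_mem (x0 : α) {S : List α} {e : α} (h : e ∈ S) :
    ∃ i, i < S.length ∧ S.getD i x0 = e := by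
  obtain ⟨i, hi, hie⟩ := List.mem_iff_getElem.mp h
  exact ⟨i, hi, by rw [List.getD_eq_getElem _ _ hi]; exact hie⟩

end ListHelpers


lemma flip_of_mem {A C : Fin n ≃ Fin n} {l} (hW : W Y A l C) (hnd : (sps A l).Nodup)
    {i j : Fin n} (hij : i ≠ j) (hm : npr i j ∈ sps A l) : ¬(ord A i j ↔ ord C i j) := by
  have h1 : cnt (npr i j) (sps A l) = 1 :=
    le_antisymm (cnt_le_one_of_nodup hnd) (cnt_pos hm)
  rw [ord_iff_even hW hij, h1]
  simp

lemma mem_of_flip {A C : Fin n ≃ Fin n} {l} (hW : W Y A l C)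
    {i j : Fin n} (hij : i ≠ j) (hf : ¬(ord A i j ↔ ord C i j)) : npr i j ∈ sps A l := by
  by_contra hm
  have h0 : cnt (npr i j) (sps A l) = 0 := cnt_eq_zero hm
  exact hf ((ord_iff_even hW hij).mpr (by simp [h0]))

lemma block {A : Fin n ≃ Fin n} {u v w : Fin n}
    (hA : (A.symm v : ℕ) + 1 = (A.symm u : ℕ)) (hwu : w ≠ u) (hwv : w ≠ v) :
    (ord A v w ↔ ord A u w) := by
  have n1 : (A.symm w : ℕ) ≠ (A.symm u : ℕ) := fun e => hwu (A.symm.injective (Fin.ext e))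
  have n2 : (A.symm w : ℕ) ≠ (A.symm v : ℕ) := fun e => hwv (A.symm.injective (Fin.ext e))
  unfold ord
  rw [Fin.lt_def, Fin.lt_def]
  omega

lemma edges_ok {u v : Fin n} {A C : Fin n ≃ Fin n} {l} (hW : W Y A l C) (huv : u ≠ v)
    (hA : (A.symm v : ℕ) + 1 = (A.symm u : ℕ)) (hC : (C.symm v : ℕ) + 1 = (C.symm u : ℕ))
    (hnd : (sps A l).Nodup) (he : npr u v ∉ sps A l) :
    ∀ f ∈ sps A l, Y.Adj (Equiv.swap u v f.1) (Equiv.swap u v f.2) := by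
  intro f hf
  have hadj := adj_of_mem_sps hW f hf
  have hflt := fst_lt_of_mem_sps hW f hf
  have hfnpr : npr f.1 f.2 = f := npr_of_lt hflt
  have cross : ∀ w : Fin n, w ≠ u → w ≠ v →
      (npr v w ∈ sps A l → npr u w ∈ sps A l) ∧
      (npr u w ∈ sps A l → npr v w ∈ sps A l) := by
    intro w hwu hwv
    have b1 := block (A := A) hA hwu hwv
    have b2 := block (A := C) hC hwu hwv
    constructor
    · intro hm
      refine mem_of_flip hW (Ne.symm hwu) ?_
      have hflip := flip_of_mem hW hnd (Ne.symm hwv) hm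
      tauto
    · intro hm
      refine mem_of_flip hW (Ne.symm hwv) ?_
      have hflip := flip_of_mem hW hnd (Ne.symm hwu) hm
      tauto
  have adj_of_npr : ∀ x y : Fin n, npr x y ∈ sps A l → Y.Adj x y := by
    intro x y hm
    have := adj_of_mem_sps hW _ hm
    rcases npr_cases x y with hcc | hcc <;> rw [hcc] at this
    · exact this
    · exact this.symm
  by_cases h1 : f.1 = u
  · have hw2v : f.2 ≠ v := by
      rintro h2
      apply he
      have hlt : u < v := by rw [← h1, ← h2]; exact hflt
      rw [show npr u v = f from by rw [← h1, ← h2, hfnpr]]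
      exact hf
    have hw2u : f.2 ≠ u := by
      rintro h2
      have := hflt; rw [h1, h2] at this; exact lt_irrefl _ this
    have hm : npr u f.2 ∈ sps A l := by rw [← h1, hfnpr]; exact hf
    have hm2 := (cross f.2 hw2u hw2v).2 hm
    rw [h1, Equiv.swap_apply_left, Equiv.swap_apply_of_ne_of_ne hw2u hw2v]
    exact adj_of_npr v f.2 hm2
  · by_cases h2 : f.1 = v
    · have hw2u : f.2 ≠ u := by
        rintro h3
        apply he
        have hlt : v < u := by rw [← h2, ← h3]; exact hflt
        rw [show npr u v = f from by
          unfold npr; rw [if_neg (asymm hlt), ← h2, ← h3]]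
        exact hf
      have hw2v : f.2 ≠ v := by
        rintro h3
        have := hflt; rw [h2, h3] at this; exact lt_irrefl _ this
      have hm : npr v f.2 ∈ sps A l := by rw [← h2, hfnpr]; exact hf
      have hm2 := (cross f.2 hw2u hw2v).1 hm
      rw [h2, Equiv.swap_apply_right, Equiv.swap_apply_of_ne_of_ne hw2u hw2v]
      exact adj_of_npr u f.2 hm2
    · by_cases h3 : f.2 = u
      · have hm : npr u f.1 ∈ sps A l := by
          rw [npr_comm]
          rw [h3] at hfnpr
          rw [hfnpr]
          exact hf
        have hm2 := (cross f.1 h1 h2).2 hm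
        rw [h3, Equiv.swap_apply_left, Equiv.swap_apply_of_ne_of_ne h1 h2]
        exact (adj_of_npr v f.1 hm2).symm
      · by_cases h4 : f.2 = v
        · have hm : npr v f.1 ∈ sps A l := by
            rw [npr_comm]
            rw [h4] at hfnpr
            rw [hfnpr]
            exact hf
          have hm2 := (cross f.1 h1 h2).1 hm
          rw [h4, Equiv.swap_apply_right, Equiv.swap_apply_of_ne_of_ne h1 h2]
          exact (adj_of_npr u f.1 hm2).symm
        · rw [Equiv.swap_apply_of_ne_of_ne h1 h2, Equiv.swap_apply_of_ne_of_ne h3 h4]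
          exact hadj

lemma W_reflect {u v : Fin n} {A C : Fin n ≃ Fin n} {l} (hW : W Y A l C)
    (hE : ∀ f ∈ sps A l, Y.Adj (Equiv.swap u v f.1) (Equiv.swap u v f.2)) :
    W Y (A.trans (Equiv.swap u v)) l (C.trans (Equiv.swap u v)) := by
  induction hW with
  | nil => exact W.nil _
  | @cons σ' τ' p q l' hpq hY hw ih =>
    refine W.cons hpq ?_ ?_
    · have hh := hE (npr (σ' p) (σ' q)) (by rw [show sps σ' ((p, q) :: l') =
        npr (σ' p) (σ' q) :: sps (mv σ' p q) l' from rfl]; exact List.mem_cons_self)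
      show Y.Adj (Equiv.swap u v (σ' p)) (Equiv.swap u v (σ' q))
      rcases npr_cases (σ' p) (σ' q) with hcc | hcc <;> rw [hcc] at hh
      · exact hh
      · exact hh.symm
    · have hmv : mv (σ'.trans (Equiv.swap u v)) p q = (mv σ' p q).trans (Equiv.swap u v) := by
        ext x; rfl
      rw [hmv]
      refine ih ?_
      intro f hf
      refine hE f ?_
      rw [show sps σ' ((p, q) :: l') = npr (σ' p) (σ' q) :: sps (mv σ' p q) l' from rfl]
      exact List.mem_cons_of_mem _ hf


lemma W_cons_inv {σ τ : Fin n ≃ Fin n} {p q : Fin n} {l} (h : W Y σ ((p, q) :: l) τ) :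
    ((p : ℕ) + 1 = q) ∧ Y.Adj (σ p) (σ q) ∧ W Y (mv σ p q) l τ := by
  cases h with
  | cons hpq hY hw => exact ⟨hpq, hY, hw⟩

lemma shorten {σ τ : Fin n ≃ Fin n} {l} (hW : W Y σ l τ) (hnd : ¬ (sps σ l).Nodup) :
    ∃ l', W Y σ l' τ ∧ l'.length + 2 = l.length := by
  classical
  have hlne : sps σ l ≠ [] := by rintro hx; rw [hx] at hnd; exact hnd List.nodup_nil
  set x0 := (sps σ l).head hlne with hx0
  obtain ⟨s, t, hst, htL, heq0, hmin⟩ := exists_first_repeat x0 hnd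
  have hLl : (sps σ l).length = l.length := sps_length σ l
  have ht_lt : t < l.length := by omega
  have hs_lt : s < l.length := by omega
  set A := l.take s with hAdef
  set ms := l.getD s x0 with hmsdef
  set B := (l.drop (s + 1)).take (t - s - 1) with hBdef
  set mt := l.getD t x0 with hmtdef
  set C := l.drop (t + 1) with hCdef
  have hlA : A.length = s := by
    rw [hAdef, List.length_take]; omega
  have hlB : B.length = t - s - 1 := by
    rw [hBdef, List.length_take, List.length_drop]; omega
  have hdecomp : l = A ++ (ms :: (B ++ (mt :: C))) := by
    have h1 : l.drop s = ms :: l.drop (s + 1) := by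
      rw [List.drop_eq_getElem_cons hs_lt]
      congr 1
      exact (List.getD_eq_getElem l x0 hs_lt).symm
    have h2 : l.drop (s + 1) = B ++ l.drop t := by
      conv_lhs => rw [← List.take_append_drop (t - s - 1) (l.drop (s + 1))]
      congr 1
      rw [List.drop_drop]
      congr 1
      omega
    have h3 : l.drop t = mt :: l.drop (t + 1) := by
      rw [List.drop_eq_getElem_cons ht_lt]
      congr 1
      exact (List.getD_eq_getElem l x0 ht_lt).symm
    conv_lhs => rw [← List.take_append_drop s l]
    rw [h1, h2, h3]
  -- split the walk
  have hW2 : W Y σ (A ++ (ms :: (B ++ (mt :: C)))) τ := by rw [← hdecomp]; exact hW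
  obtain ⟨hWA, hWrest⟩ := W_append_split hW2
  set α0 := run σ A with hα0
  have hWrest' : W Y α0 ((ms.1, ms.2) :: (B ++ (mt :: C))) τ := hWrest
  obtain ⟨hpq, hY1, hw1⟩ := W_cons_inv hWrest'
  set A1 := mv α0 ms.1 ms.2 with hA1def
  obtain ⟨hWB, hWrest2⟩ := W_append_split hw1
  set C0 := run A1 B with hC0
  have hWrest2' : W Y C0 ((mt.1, mt.2) :: C) τ := hWrest2
  obtain ⟨hpq', hY2, hw2⟩ := W_cons_inv hWrest2'
  -- the swapped values
  set u := α0 ms.1 with hu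
  set v := α0 ms.2 with hv
  have huv : u ≠ v := hY1.ne
  -- sps decomposition
  have hsps : sps σ l = sps σ A ++ (npr u v ::
      (sps A1 B ++ (npr (C0 mt.1) (C0 mt.2) :: sps (mv C0 mt.1 mt.2) C))) := by
    conv_lhs => rw [hdecomp]
    rw [sps_append]
    congr 1
    · rw [← hα0]
      have : sps α0 (ms :: (B ++ (mt :: C))) =
          npr (α0 ms.1) (α0 ms.2) :: sps (mv α0 ms.1 ms.2) (B ++ (mt :: C)) := rfl
      rw [this, ← hA1def, sps_append, ← hC0]
      rfl
  have hlspsA : (sps σ A).length = s := by rw [sps_length]; exact hlA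
  have hlspsB : (sps A1 B).length = t - s - 1 := by rw [sps_length]; exact hlB
  have hgetDs : (sps σ l).getD s x0 = npr u v := by
    rw [hsps, List.getD_append_right _ _ _ _ hlspsA.le]
    rw [hlspsA, Nat.sub_self]
    rfl
  have hgetseg : ∀ i, i < t - s - 1 → (sps σ l).getD (s + 1 + i) x0 = (sps A1 B).getD i x0 := by
    intro i hi
    rw [hsps, List.getD_append_right _ _ _ _ (by omega : (sps σ A).length ≤ s + 1 + i)]
    have he1 : s + 1 + i - (sps σ A).length = i + 1 := by rw [hlspsA]; omega
    rw [he1, List.getD_cons_succ, List.getD_append _ _ _ _ (by omega : i < (sps A1 B).length)]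
  have hgetDt : (sps σ l).getD t x0 = npr (C0 mt.1) (C0 mt.2) := by
    rw [hsps, List.getD_append_right _ _ _ _ (by omega : (sps σ A).length ≤ t)]
    have he1 : t - (sps σ A).length = (t - s - 1) + 1 := by rw [hlspsA]; omega
    rw [he1, List.getD_cons_succ,
      List.getD_append_right _ _ _ _ hlspsB.le, hlspsB, Nat.sub_self]
    rfl
  have heq : npr u v = npr (C0 mt.1) (C0 mt.2) := by
    rw [← hgetDs, ← hgetDt]; exact heq0
  have hndB : (sps A1 B).Nodup := by
    refine nodup_of_getD_ne x0 ?_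
    intro i j hij hjlen
    rw [hlspsB] at hjlen
    rw [← hgetseg i (by omega), ← hgetseg j (by omega)]
    exact hmin (s + 1 + i) (s + 1 + j) (by omega) (by omega) (by omega)
  have he_notin : npr u v ∉ sps A1 B := by
    intro hmem
    obtain ⟨i, hi, hie⟩ := getD_of_mem x0 hmem
    rw [hlspsB] at hi
    refine hmin s (s + 1 + i) le_rfl (by omega) (by omega) ?_
    rw [hgetDs, hgetseg i hi, hie]
  -- endpoint configurations
  have hA1v : A1.symm v = ms.1 := by
    rw [hA1def, hv, mv_symm_apply]
    simp
  have hA1u : A1.symm u = ms.2 := by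
    rw [hA1def, hu, mv_symm_apply]
    simp
  have hA : (A1.symm v : ℕ) + 1 = (A1.symm u : ℕ) := by rw [hA1v, hA1u]; exact hpq
  have hcnt0 : cnt (npr u v) (sps A1 B) = 0 := cnt_eq_zero he_notin
  have hordAC : ord A1 u v ↔ ord C0 u v := (ord_iff_even hWB huv).mpr (by rw [hcnt0]; simp)
  have hordA1 : ¬ ord A1 u v := fun hx => asymm (flt hpq) ((ord_mv_pair α0 ms.1 ms.2).mp hx)
  have hordC0 : ¬ ord C0 u v := fun hx => hordA1 (hordAC.mpr hx)
  have hcase : C0 mt.1 = v ∧ C0 mt.2 = u := by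
    rcases eq_of_npr_eq heq with ⟨e1, e2⟩ | ⟨e1, e2⟩
    · exfalso
      apply hordC0
      rw [hu, hv] at *
      rw [e1, e2]
      exact (ord_pair C0 mt.1 mt.2).mpr (flt hpq')
    · exact ⟨e2.symm, e1.symm⟩
  have hC : (C0.symm v : ℕ) + 1 = (C0.symm u : ℕ) := by
    have h1 : C0.symm v = mt.1 := by rw [← hcase.1]; simp
    have h2 : C0.symm u = mt.2 := by rw [← hcase.2]; simp
    rw [h1, h2]; exact hpq'
  -- reflect the middle segment
  have hE := edges_ok hWB huv hA hC hndB he_notin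
  have hrefl := W_reflect hWB hE
  have hA1g : A1.trans (Equiv.swap u v) = α0 := by
    rw [hA1def, mv_eq α0 ms.1 ms.2, ← hu, ← hv]
    exact mv_trans_swap α0 u v
  have hC0g : C0.trans (Equiv.swap u v) = mv C0 mt.1 mt.2 := by
    rw [mv_eq C0 mt.1 mt.2, hcase.1, hcase.2, Equiv.swap_comm]
  rw [hA1g, hC0g] at hrefl
  have hfinal : W Y σ (A ++ (B ++ C)) τ := W_append hWA (W_append hrefl hw2)
  refine ⟨A ++ (B ++ C), hfinal, ?_⟩
  have hlen : l.length = A.length + (1 + (B.length + (1 + C.length))) := by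
    conv_lhs => rw [hdecomp]
    simp [List.length_append]
    omega
  simp only [List.length_append]
  omega


lemma exists_short' (N : ℕ) : ∀ {σ τ : Fin n ≃ Fin n} {l}, l.length ≤ N → W Y σ l τ →
    ∃ l', W Y σ l' τ ∧ l'.length = (I σ τ).card := by
  induction N with
  | zero =>
    intro σ τ l hl hW
    by_cases hnd : (sps σ l).Nodup
    · exact ⟨l, hW, length_eq_card_of_nodup hW hnd⟩
    · obtain ⟨l', hW', hlen⟩ := shorten hW hnd
      omega
  | succ N ih =>
    intro σ τ l hl hW
    by_cases hnd : (sps σ l).Nodup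
    · exact ⟨l, hW, length_eq_card_of_nodup hW hnd⟩
    · obtain ⟨l', hW', hlen⟩ := shorten hW hnd
      exact ih (by omega) hW'

lemma exists_short {σ τ : Fin n ≃ Fin n} {l} (hW : W Y σ l τ) :
    ∃ l', W Y σ l' τ ∧ l'.length = (I σ τ).card :=
  exists_short' l.length le_rfl hW

lemma move_of_adj {σ σ' : Fin n ≃ Fin n} (h : (FS (pathGraph n) Y).Adj σ σ') :
    ∃ p q : Fin n, (p : ℕ) + 1 = q ∧ Y.Adj (σ p) (σ q) ∧ σ' = mv σ p q := by
  obtain ⟨a, b, hX, hY, h1, h2, h3⟩ := h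
  rcases pathGraph_adj.mp hX with hab | hab
  · refine ⟨a, b, hab, hY, ?_⟩
    ext c
    rw [mv_apply]
    by_cases hca : c = a
    · subst hca
      rw [Equiv.swap_apply_left]
      exact congrArg Fin.val h2.symm
    · by_cases hcb : c = b
      · subst hcb
        rw [Equiv.swap_apply_right]
        exact congrArg Fin.val h1.symm
      · rw [Equiv.swap_apply_of_ne_of_ne hca hcb]
        exact congrArg Fin.val (h3 c hca hcb).symm
  · refine ⟨b, a, hab, hY.symm, ?_⟩
    ext c
    rw [mv_apply]
    by_cases hca : c = a
    · subst hca
      rw [Equiv.swap_apply_right]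
      exact congrArg Fin.val h2.symm
    · by_cases hcb : c = b
      · subst hcb
        rw [Equiv.swap_apply_left]
        exact congrArg Fin.val h1.symm
      · rw [Equiv.swap_apply_of_ne_of_ne hcb hca]
        exact congrArg Fin.val (h3 c hca hcb).symm

lemma adj_mv {σ : Fin n ≃ Fin n} {p q : Fin n} (hpq : (p : ℕ) + 1 = q)
    (hY : Y.Adj (σ p) (σ q)) : (FS (pathGraph n) Y).Adj σ (mv σ p q) := by
  refine ⟨p, q, pathGraph_adj.mpr (Or.inl hpq), hY, ?_, ?_, ?_⟩
  · rw [mv_apply, Equiv.swap_apply_right]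
  · rw [mv_apply, Equiv.swap_apply_left]
  · intro c hcp hcq
    rw [mv_apply, Equiv.swap_apply_of_ne_of_ne hcp hcq]

lemma W_of_walk {σ τ : Fin n ≃ Fin n} (w : (FS (pathGraph n) Y).Walk σ τ) :
    ∃ l, W Y σ l τ ∧ l.length = w.length := by
  induction w with
  | nil => exact ⟨[], W.nil _, rfl⟩
  | cons h w' ih =>
    obtain ⟨p, q, hpq, hY', hmv⟩ := move_of_adj h
    obtain ⟨l, hl, hlen⟩ := ih
    subst hmv
    exact ⟨(p, q) :: l, W.cons hpq hY' hl, by simp [hlen]⟩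

lemma walk_of_W {σ τ : Fin n ≃ Fin n} {l} (hW : W Y σ l τ) :
    ∃ w : (FS (pathGraph n) Y).Walk σ τ, w.length = l.length := by
  induction hW with
  | nil => exact ⟨SimpleGraph.Walk.nil, rfl⟩
  | @cons σ' τ' p q l' hpq hY' hw ih =>
    obtain ⟨w, hwlen⟩ := ih
    exact ⟨SimpleGraph.Walk.cons (adj_mv hpq hY') w, by simp [hwlen]⟩

lemma main_dist {σ τ : Fin n ≃ Fin n} (h : (FS (pathGraph n) Y).Reachable σ τ) :
    (FS (pathGraph n) Y).dist σ τ = (I σ τ).card := by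
  refine le_antisymm ?_ ?_
  · obtain ⟨w⟩ := h
    obtain ⟨l, hWl, -⟩ := W_of_walk w
    obtain ⟨l', hW', hlen'⟩ := exists_short hWl
    obtain ⟨w', hw'len⟩ := walk_of_W hW'
    calc (FS (pathGraph n) Y).dist σ τ ≤ w'.length := SimpleGraph.dist_le w'
      _ = (I σ τ).card := by rw [hw'len, hlen']
  · obtain ⟨w, hwlen⟩ := h.exists_walk_length_eq_dist
    obtain ⟨l, hWl, hlen⟩ := W_of_walk w
    calc (I σ τ).card ≤ l.length := card_I_le hWl
      _ = (FS (pathGraph n) Y).dist σ τ := by rw [hlen, hwlen]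

end FSProof

/-- For bijections `σ`, `τ` lying in the same connected component of
`FS(Path_n, Y)`, the distance between `σ` and `τ` equals `inv(σ, τ)`, the number of
`(σ, τ)`-inversions. -/

theorem fs_path_dist_eq_inversions (n : ℕ) (Y : SimpleGraph (Fin n))
    (σ τ : Fin n ≃ Fin n) (h : (FS (pathGraph n) Y).Reachable σ τ) :
    (FS (pathGraph n) Y).dist σ τ =
      {p : Fin n × Fin n | p.1 < p.2 ∧
        ((σ.symm p.1 < σ.symm p.2 ∧ τ.symm p.2 < τ.symm p.1) ∨
          (σ.symm p.2 < σ.symm p.1 ∧ τ.symm p.1 < τ.symm p.2))}.ncard := by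
  have hset : {p : Fin n × Fin n | p.1 < p.2 ∧
      ((σ.symm p.1 < σ.symm p.2 ∧ τ.symm p.2 < τ.symm p.1) ∨
        (σ.symm p.2 < σ.symm p.1 ∧ τ.symm p.1 < τ.symm p.2))} = ↑(FSProof.I σ τ) := by
    ext ⟨i, j⟩
    simp [FSProof.I]
  rw [hset, Set.ncard_coe_finset]
  exact FSProof.main_dist h
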